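/- Under hypotheses (H2)–(H4) on the correlation functions, there exist q' ∈ [1,∞) and F' ∈ L^{q'}(ℝ³) ∩ L^∞(ℝ³) such that for all y, z, z' ∈ ℝ³: g₄(0,y,z,z') = g₃(0,y,z)g₃(0,y,z')/g₂(0,y) + g₃(0,z,z')g₃(y,z,z')/g₂(z,z') − g₂(0,z)g₂(y,z)g₂(0,z')g₂(y,z') + R̃₃(y,z,z'), with |R̃₃(y,z,z')| ≤ F'(y)F'(z−z'). -/

import Mathlib

noncomputable section
open MeasureTheory Metric Real Filter

/-- Three-dimensional Euclidean space. -/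
abbrev E3 : Type := EuclideanSpace ℝ (Fin 3)

/-- `F ∈ L^q(ℝ³) ∩ L^∞(ℝ³)`. -/
def MemLqLinf (q : ℝ) (F : E3 → ℝ) : Prop :=
  MemLp F (ENNReal.ofReal q) volume ∧ MemLp F ⊤ volume

/-- `√(t + t²) ≤ √t + t` for `t ≥ 0`. -/
lemma aux_sqrt_add_sq {t : ℝ} (ht : 0 ≤ t) :
    Real.sqrt (t + t ^ 2) ≤ Real.sqrt t + t := by
  have h1 : t + t ^ 2 ≤ (Real.sqrt t + t) ^ 2 := by
    nlinarith [Real.sq_sqrt ht, Real.sqrt_nonneg t]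
  calc Real.sqrt (t + t ^ 2) ≤ Real.sqrt ((Real.sqrt t + t) ^ 2) := Real.sqrt_le_sqrt h1
    _ = Real.sqrt t + t := Real.sqrt_sq (by positivity)

/-- `1 ≤ √t + t` for `t ≥ 1/2`. -/
lemma aux_one_le_sqrt_add {t : ℝ} (ht : 1 / 2 ≤ t) : 1 ≤ Real.sqrt t + t := by
  have h0 : (0 : ℝ) ≤ t := by linarith
  rcases le_or_gt 1 t with h | h
  · have := Real.sqrt_nonneg t; linarith
  · have h2 : t ≤ Real.sqrt t := (Real.le_sqrt h0 h0).mpr (by nlinarith)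
    linarith

/-- Arithmetic combination lemma: the four cases all give the product bound. -/
lemma aux_arith {K a b P : ℝ} (hK : 1 ≤ K) (ha : 0 ≤ a) (hb : 0 ≤ b) (hP : 0 ≤ P)
    (hcase :
      (P ≤ K * (a + a ^ 2) ∧ P ≤ K * (b + b ^ 2)) ∨
      (1 / 2 ≤ a ∧ P ≤ K * (b + b ^ 2) ∧ P ≤ K * (1 + a + b)) ∨
      (1 / 2 ≤ b ∧ P ≤ K * (a + a ^ 2) ∧ P ≤ K * (1 + a + b)) ∨
      (1 / 2 ≤ a ∧ 1 / 2 ≤ b ∧ P ≤ K * (1 + a + b))) :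
    P ≤ 4 * K * ((Real.sqrt a + a) * (Real.sqrt b + b)) := by
  have hK0 : (0 : ℝ) ≤ K := by linarith
  have hsa := Real.sqrt_nonneg a
  have hsb := Real.sqrt_nonneg b
  have hXa : 0 ≤ Real.sqrt a + a := by linarith
  have hXb : 0 ≤ Real.sqrt b + b := by linarith
  have hsqa : Real.sqrt a * Real.sqrt a = a := Real.mul_self_sqrt ha
  have hsqb : Real.sqrt b * Real.sqrt b = b := Real.mul_self_sqrt hb
  have key_glob : P ≤ K * (1 + a + b) → 1 ≤ Real.sqrt a + a → 1 ≤ Real.sqrt b + b →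
      P ≤ 4 * K * ((Real.sqrt a + a) * (Real.sqrt b + b)) := by
    intro h2 hφa hφb
    have e1 : 1 + a ≤ 2 * (Real.sqrt a + a) := by linarith
    have e2 : 1 + b ≤ 2 * (Real.sqrt b + b) := by linarith
    have h3 : P ≤ K * ((1 + a) * (1 + b)) := by
      nlinarith [mul_nonneg hK0 (mul_nonneg ha hb)]
    calc P ≤ K * ((1 + a) * (1 + b)) := h3
      _ ≤ K * ((2 * (Real.sqrt a + a)) * (2 * (Real.sqrt b + b))) := by
          apply mul_le_mul_of_nonneg_left _ hK0
          exact mul_le_mul e1 e2 (by linarith) (by linarith)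
      _ = 4 * K * ((Real.sqrt a + a) * (Real.sqrt b + b)) := by ring
  have key_small : ∀ t : ℝ, 0 ≤ t → t ≤ 1 → P ≤ K * (t + t ^ 2) →
      P ≤ 2 * K * (Real.sqrt t + t) := by
    intro t ht0 ht1 hPt
    have hst := Real.sqrt_nonneg t
    have h1 : P ≤ 2 * K * t := by
      nlinarith [mul_nonneg hK0 (mul_nonneg (by linarith : (0:ℝ) ≤ 1 - t) ht0)]
    nlinarith [mul_nonneg hK0 hst]
  rcases hcase with ⟨h1, h2⟩ | ⟨hha, h1, h2⟩ | ⟨hhb, h1, h2⟩ | ⟨hha, hhb, h2⟩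
  · -- geometric mean case
    have e1 : a + a ^ 2 ≤ (Real.sqrt a + a) ^ 2 := by nlinarith
    have e2 : b + b ^ 2 ≤ (Real.sqrt b + b) ^ 2 := by nlinarith
    have hp1 : P * P ≤ (K * (a + a ^ 2)) * (K * (b + b ^ 2)) :=
      mul_le_mul h1 h2 hP (by positivity)
    have hp2 : (a + a ^ 2) * (b + b ^ 2) ≤ (Real.sqrt a + a) ^ 2 * (Real.sqrt b + b) ^ 2 :=
      mul_le_mul e1 e2 (by positivity) (by positivity)
    have hP2 : P ^ 2 ≤ (K * ((Real.sqrt a + a) * (Real.sqrt b + b))) ^ 2 := by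
      nlinarith [mul_le_mul_of_nonneg_left hp2 (mul_nonneg hK0 hK0)]
    have hfin : P ≤ K * ((Real.sqrt a + a) * (Real.sqrt b + b)) := by
      have l1 : Real.sqrt (P ^ 2) = P := Real.sqrt_sq hP
      have l2 : Real.sqrt ((K * ((Real.sqrt a + a) * (Real.sqrt b + b))) ^ 2)
          = K * ((Real.sqrt a + a) * (Real.sqrt b + b)) := Real.sqrt_sq (by positivity)
      have l3 := Real.sqrt_le_sqrt hP2
      rw [l1, l2] at l3; exact l3
    nlinarith [mul_nonneg hXa hXb]
  · -- a ≥ 1/2 (bad y), b-bound available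
    have hφa : 1 ≤ Real.sqrt a + a := aux_one_le_sqrt_add hha
    rcases le_or_gt b 1 with hb1 | hb1
    · have hs := key_small b hb hb1 h1
      -- P ≤ 2K(√b+b) ≤ 4K(√a+a)(√b+b)
      nlinarith [mul_nonneg hK0 (mul_nonneg (by linarith : (0:ℝ) ≤ Real.sqrt a + a - 1) hXb),
        mul_nonneg hK0 hXb]
    · have hφb : 1 ≤ Real.sqrt b + b := by linarith
      exact key_glob h2 hφa hφb
  · -- b ≥ 1/2 (bad w), a-bound available
    have hφb : 1 ≤ Real.sqrt b + b := aux_one_le_sqrt_add hhb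
    rcases le_or_gt a 1 with ha1 | ha1
    · have hs := key_small a ha ha1 h1
      nlinarith [mul_nonneg hK0 (mul_nonneg (by linarith : (0:ℝ) ≤ Real.sqrt b + b - 1) hXa),
        mul_nonneg hK0 hXa]
    · have hφa : 1 ≤ Real.sqrt a + a := by linarith
      exact key_glob h2 hφa hφb
  · exact key_glob h2 (aux_one_le_sqrt_add hha) (aux_one_le_sqrt_add hhb)

set_option maxHeartbeats 4000000 in
/-- **(H4′)** Refined decomposition of the four-point correlation function under (H2)–(H4). -/
theorem refined_g4_decomposition
    (g₂ : E3 → E3 → ℝ) (g₃ : E3 → E3 → E3 → ℝ)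
    (hg₂meas : Measurable fun p : E3 × E3 => g₂ p.1 p.2)
    (hg₃meas : Measurable fun p : E3 × E3 × E3 => g₃ p.1 p.2.1 p.2.2)
    (hg₂nonneg : ∀ a b, 0 ≤ g₂ a b) (hg₃nonneg : ∀ a b c, 0 ≤ g₃ a b c)
    (hg₂bdd : ∃ C : ℝ, ∀ a b, g₂ a b ≤ C) (hg₃bdd : ∃ C : ℝ, ∀ a b c, g₃ a b c ≤ C)
    (hg₂perm : ∀ a b, g₂ a b = g₂ b a)
    (hg₃perm₁ : ∀ a b c, g₃ a b c = g₃ b a c)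
    (hg₃perm₂ : ∀ a b c, g₃ a b c = g₃ a c b)
    (hg₂trans : ∀ a b t : E3, g₂ (a + t) (b + t) = g₂ a b)
    (hg₃trans : ∀ a b c t : E3, g₃ (a + t) (b + t) (c + t) = g₃ a b c)
    (q : ℝ) (hq : 1 < q) (F : E3 → ℝ) (hF : MemLqLinf q F)
    (hF0 : Tendsto F (cocompact E3) (nhds 0))
    (hH2 : ∀ y : E3, |g₂ 0 y - 1| ≤ F y)
    (hH3 : ∃ R₂ : E3 → E3 → ℝ,
        (∀ y z : E3, g₃ 0 y z = g₂ 0 y * (g₂ 0 z + R₂ y z)) ∧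
        ∀ y z : E3, |R₂ y z| ≤ F (y - z))
    (g₄ : E3 → E3 → E3 → E3 → ℝ)
    (hg₄meas : Measurable fun p : E3 × E3 × E3 × E3 => g₄ p.1 p.2.1 p.2.2.1 p.2.2.2)
    (hg₄nonneg : ∀ a b c d, 0 ≤ g₄ a b c d)
    (hg₄bdd : ∃ C : ℝ, ∀ a b c d, g₄ a b c d ≤ C)
    (hg₄perm₁ : ∀ a b c d, g₄ a b c d = g₄ b a c d)
    (hg₄perm₂ : ∀ a b c d, g₄ a b c d = g₄ a c b d)
    (hg₄perm₃ : ∀ a b c d, g₄ a b c d = g₄ a b d c)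
    (hg₄trans : ∀ a b c d t : E3, g₄ (a + t) (b + t) (c + t) (d + t) = g₄ a b c d)
    (hv₂₃ : ∀ a b c : E3, g₂ a b = 0 → g₃ a b c = 0)
    (hv₃₄ : ∀ a b c d : E3, g₃ a b c = 0 → g₄ a b c d = 0)
    (hH4 : ∃ R₃ : E3 → E3 → E3 → ℝ,
        (∀ y z z' : E3, g₄ 0 y z z' = g₃ 0 y z * (g₃ 0 y z' / g₂ 0 y + R₃ y z z')) ∧
        ∀ y z z' : E3, |R₃ y z z'| ≤ F (z - z'))
    :
    ∃ q' : ℝ, 1 ≤ q' ∧ ∃ F' : E3 → ℝ, MemLqLinf q' F' ∧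
      ∃ R' : E3 → E3 → E3 → ℝ,
        (∀ y z z' : E3, g₄ 0 y z z'
            = g₃ 0 y z * g₃ 0 y z' / g₂ 0 y
              + g₃ 0 z z' * g₃ y z z' / g₂ z z'
              - g₂ 0 z * g₂ y z * g₂ 0 z' * g₂ y z'
              + R' y z z') ∧
        ∀ y z z' : E3, |R' y z z'| ≤ F' y * F' (z - z') := by
  obtain ⟨R₂, hR₂, hR₂b⟩ := hH3
  obtain ⟨R₃, hR₃, hR₃b⟩ := hH4
  obtain ⟨C₂', hC₂'⟩ := hg₂bdd
  obtain ⟨C₃', hC₃'⟩ := hg₃bdd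
  obtain ⟨C₄', hC₄'⟩ := hg₄bdd
  set C₂ : ℝ := max C₂' 1 with hC₂def
  set C₃ : ℝ := max C₃' 1 with hC₃def
  set C₄ : ℝ := max C₄' 1 with hC₄def
  have hC₂1 : (1 : ℝ) ≤ C₂ := le_max_right _ _
  have hC₃1 : (1 : ℝ) ≤ C₃ := le_max_right _ _
  have hC₄1 : (1 : ℝ) ≤ C₄ := le_max_right _ _
  have hC₂ : ∀ a b, g₂ a b ≤ C₂ := fun a b => (hC₂' a b).trans (le_max_left _ _)
  have hC₃ : ∀ a b c, g₃ a b c ≤ C₃ := fun a b c => (hC₃' a b c).trans (le_max_left _ _)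
  have hC₄ : ∀ a b c d, g₄ a b c d ≤ C₄ := fun a b c d => (hC₄' a b c d).trans (le_max_left _ _)
  have hFnn : ∀ x, 0 ≤ F x := fun x => (abs_nonneg _).trans (hH2 x)
  -- translation helper for g₂
  have hg₂t : ∀ u v : E3, g₂ 0 (v - u) = g₂ u v := by
    intro u v
    have ht := hg₂trans 0 (v - u) u
    rw [show (0 : E3) + u = u from by abel, show v - u + u = v from by abel] at ht
    exact ht.symm
  -- key H3 variants
  have hL2 : ∀ y z z' : E3, g₃ y z z' = g₂ y z * (g₂ y z' + R₂ (z - y) (z' - y)) := by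
    intro y z z'
    have h := hR₂ (z - y) (z' - y)
    have ht := hg₃trans 0 (z - y) (z' - y) y
    rw [show (0 : E3) + y = y from by abel, show z - y + y = z from by abel,
      show z' - y + y = z' from by abel] at ht
    rw [hg₂t y z, hg₂t y z'] at h
    exact ht.trans h
  have hL2b : ∀ y z z' : E3, |R₂ (z - y) (z' - y)| ≤ F (z - z') := by
    intro y z z'
    have h := hR₂b (z - y) (z' - y)
    rw [show z - y - (z' - y) = z - z' from by abel] at h
    exact h
  have hL3 : ∀ y z : E3, g₃ 0 y z = g₂ y z * (g₂ 0 z + R₂ (y - z) (-z)) := by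
    intro y z
    have h := hR₂ (y - z) (-z)
    have ht := hg₃trans 0 (y - z) (-z) z
    rw [show (0 : E3) + z = z from by abel, show y - z + z = y from by abel,
      show -z + z = (0 : E3) from by abel] at ht
    -- ht : g₃ z y 0 = g₃ 0 (y - z) (-z)
    have hperm : g₃ z y 0 = g₃ 0 y z := by
      rw [hg₃perm₁ z y 0, hg₃perm₂ y z 0, hg₃perm₁ y 0 z]
    have hg1 : g₂ 0 (y - z) = g₂ y z := by rw [hg₂t z y, hg₂perm z y]
    have hg2 : g₂ 0 (-z) = g₂ 0 z := by
      have h' := hg₂t z 0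
      rw [show (0 : E3) - z = -z from by abel] at h'
      rw [h', hg₂perm z 0]
    rw [hg1, hg2] at h
    exact hperm.symm.trans (ht.trans h)
  have hL3b : ∀ y z : E3, |R₂ (y - z) (-z)| ≤ F y := by
    intro y z
    have h := hR₂b (y - z) (-z)
    rw [show y - z - -z = y from by abel] at h
    exact h
  -- H4 variant with the roles of {0,y} and {z,z'} interchanged
  have hB' : ∀ y z z' : E3,
      g₄ 0 y z z' = g₃ 0 z z' * (g₃ y z z' / g₂ z z' + R₃ (z' - z) (-z) (y - z)) := by
    intro y z z'
    have h := hR₃ (z' - z) (-z) (y - z)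
    have e4 : g₄ 0 (z' - z) (-z) (y - z) = g₄ 0 y z z' := by
      have ht := hg₄trans 0 (z' - z) (-z) (y - z) z
      rw [show (0 : E3) + z = z from by abel, show z' - z + z = z' from by abel,
        show -z + z = (0 : E3) from by abel, show y - z + z = y from by abel] at ht
      rw [← ht, hg₄perm₂ z z' 0 y, hg₄perm₁ z 0 z' y, hg₄perm₃ 0 z z' y, hg₄perm₂ 0 z y z']
    have e3a : g₃ 0 (z' - z) (-z) = g₃ 0 z z' := by
      have ht := hg₃trans 0 (z' - z) (-z) z
      rw [show (0 : E3) + z = z from by abel, show z' - z + z = z' from by abel,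
        show -z + z = (0 : E3) from by abel] at ht
      rw [← ht, hg₃perm₂ z z' 0, hg₃perm₁ z 0 z']
    have e3b : g₃ 0 (z' - z) (y - z) = g₃ y z z' := by
      have ht := hg₃trans 0 (z' - z) (y - z) z
      rw [show (0 : E3) + z = z from by abel, show z' - z + z = z' from by abel,
        show y - z + z = y from by abel] at ht
      rw [← ht, hg₃perm₂ z z' y, hg₃perm₁ z y z']
    have e2 : g₂ 0 (z' - z) = g₂ z z' := hg₂t z z'
    rw [e4, e3a, e3b, e2] at h
    exact h
  have hSb : ∀ y z z' : E3, |R₃ (z' - z) (-z) (y - z)| ≤ F (-y) := by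
    intro y z z'
    have h := hR₃b (z' - z) (-z) (y - z)
    rw [show -z - (y - z) = -y from by abel] at h
    exact h
  -- H2 variant
  have hEw : ∀ z z' : E3, |g₂ z z' - 1| ≤ F (z' - z) := by
    intro z z'
    have h := hH2 (z' - z)
    rw [hg₂t z z'] at h
    exact h
  -- global constant
  set K : ℝ := C₃ + 2 * C₂ ^ 2 * (C₂ ^ 2 + 2 * C₂) + 2 * C₂ ^ 2 + C₂ ^ 4 + C₄ + 1 with hKdef
  have hC₂0 : (0 : ℝ) ≤ C₂ := by linarith
  have hK1 : (1 : ℝ) ≤ K := by nlinarith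
  have hK0 : (0 : ℝ) ≤ K := by linarith
  have hKb : C₃ + 2 * C₂ ^ 2 * (C₂ ^ 2 + 2 * C₂) ≤ K := by
    nlinarith [pow_nonneg hC₂0 2, pow_nonneg hC₂0 3, pow_nonneg hC₂0 4]
  have hKsq : 2 * C₂ ^ 2 ≤ K := by
    nlinarith [pow_nonneg hC₂0 2, pow_nonneg hC₂0 3, pow_nonneg hC₂0 4]
  have hKC₃ : C₃ ≤ K := by
    nlinarith [pow_nonneg hC₂0 2, pow_nonneg hC₂0 3, pow_nonneg hC₂0 4]
  have hKconst : C₂ ^ 4 + C₄ ≤ K := by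
    nlinarith [pow_nonneg hC₂0 2, pow_nonneg hC₂0 3, pow_nonneg hC₂0 4]
  -- the remainder
  set R' : E3 → E3 → E3 → ℝ := fun y z z' =>
    g₄ 0 y z z'
      - (g₃ 0 y z * g₃ 0 y z' / g₂ 0 y
        + g₃ 0 z z' * g₃ y z z' / g₂ z z'
        - g₂ 0 z * g₂ y z * g₂ 0 z' * g₂ y z') with hR'def
  -- main pointwise estimate
  have hmain : ∀ y z z' : E3,
      |R' y z z'| ≤ 4 * K *
        ((Real.sqrt (F y + F (-y)) + (F y + F (-y))) *
          (Real.sqrt (F (z - z') + F (z' - z)) + (F (z - z') + F (z' - z)))) := by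
    intro y z z'
    have ha0 : 0 ≤ F y + F (-y) := by have := hFnn y; have := hFnn (-y); linarith
    have hb0 : 0 ≤ F (z - z') + F (z' - z) := by
      have := hFnn (z - z'); have := hFnn (z' - z); linarith
    have hFzb : F (z - z') ≤ F (z - z') + F (z' - z) := by have := hFnn (z' - z); linarith
    have hFzb' : F (z' - z) ≤ F (z - z') + F (z' - z) := by have := hFnn (z - z'); linarith
    have hFya : F y ≤ F y + F (-y) := by have := hFnn (-y); linarith
    have hFya' : F (-y) ≤ F y + F (-y) := by have := hFnn y; linarith
    set a : ℝ := F y + F (-y) with hadef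
    set b : ℝ := F (z - z') + F (z' - z) with hbdef
    -- |g₄ - A| ≤ C₃ * F(z-z')
    have hga : |g₄ 0 y z z' - g₃ 0 y z * g₃ 0 y z' / g₂ 0 y| ≤ C₃ * F (z - z') := by
      have h := hR₃ y z z'
      have heq : g₄ 0 y z z' - g₃ 0 y z * g₃ 0 y z' / g₂ 0 y = g₃ 0 y z * R₃ y z z' := by
        rw [h]; ring
      rw [heq, abs_mul, abs_of_nonneg (hg₃nonneg _ _ _)]
      exact mul_le_mul (hC₃ _ _ _) (hR₃b y z z') (abs_nonneg _) (by linarith)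
    -- |g₄ - B| ≤ C₃ * F(-y)
    have hgb : |g₄ 0 y z z' - g₃ 0 z z' * g₃ y z z' / g₂ z z'| ≤ C₃ * F (-y) := by
      have h := hB' y z z'
      have heq : g₄ 0 y z z' - g₃ 0 z z' * g₃ y z z' / g₂ z z'
          = g₃ 0 z z' * R₃ (z' - z) (-z) (y - z) := by
        rw [h]; ring
      rw [heq, abs_mul, abs_of_nonneg (hg₃nonneg _ _ _)]
      exact mul_le_mul (hC₃ _ _ _) (hSb y z z') (abs_nonneg _) (by linarith)
    -- |C - g₄| ≤ C₂^4 + C₄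
    have hCg : |g₂ 0 z * g₂ y z * g₂ 0 z' * g₂ y z' - g₄ 0 y z z'| ≤ C₂ ^ 4 + C₄ := by
      have b1 := hC₂ 0 z; have b2 := hC₂ y z; have b3 := hC₂ 0 z'; have b4 := hC₂ y z'
      have n1 := hg₂nonneg 0 z; have n2 := hg₂nonneg y z
      have n3 := hg₂nonneg 0 z'; have n4 := hg₂nonneg y z'
      have m1 : g₂ 0 z * g₂ y z ≤ C₂ * C₂ := mul_le_mul b1 b2 n2 (by linarith)
      have m2 : g₂ 0 z * g₂ y z * g₂ 0 z' ≤ C₂ * C₂ * C₂ :=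
        mul_le_mul m1 b3 n3 (by nlinarith)
      have m3 : g₂ 0 z * g₂ y z * g₂ 0 z' * g₂ y z' ≤ C₂ * C₂ * C₂ * C₂ :=
        mul_le_mul m2 b4 n4 (by nlinarith)
      have h1 : g₂ 0 z * g₂ y z * g₂ 0 z' * g₂ y z' ≤ C₂ ^ 4 := by nlinarith [m3]
      have h2 : 0 ≤ g₂ 0 z * g₂ y z * g₂ 0 z' * g₂ y z' :=
        mul_nonneg (mul_nonneg (mul_nonneg n1 n2) n3) n4
      have h3 : 0 ≤ g₄ 0 y z z' := hg₄nonneg _ _ _ _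
      have h4 := hC₄ 0 y z z'
      rw [abs_le]; constructor
      · linarith
      · linarith
    -- global bound
    have hglobal : |R' y z z'| ≤ K * (1 + a + b) := by
      have heq : R' y z z' =
          (g₄ 0 y z z' - g₃ 0 y z * g₃ 0 y z' / g₂ 0 y)
          + (g₄ 0 y z z' - g₃ 0 z z' * g₃ y z z' / g₂ z z')
          + (g₂ 0 z * g₂ y z * g₂ 0 z' * g₂ y z' - g₄ 0 y z z') := by
        simp only [hR'def]; ring
      calc |R' y z z'| ≤
          |g₄ 0 y z z' - g₃ 0 y z * g₃ 0 y z' / g₂ 0 y|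
          + |g₄ 0 y z z' - g₃ 0 z z' * g₃ y z z' / g₂ z z'|
          + |g₂ 0 z * g₂ y z * g₂ 0 z' * g₂ y z' - g₄ 0 y z z'| := by
            rw [heq]
            exact (abs_add_le _ _).trans (add_le_add_left (abs_add_le _ _) _)
        _ ≤ C₃ * F (z - z') + C₃ * F (-y) + (C₂ ^ 4 + C₄) :=
            add_le_add (add_le_add hga hgb) hCg
        _ ≤ K * (1 + a + b) := by
            have hq1 : C₃ * F (z - z') ≤ K * b :=
              (mul_le_mul_of_nonneg_left hFzb (by linarith)).trans
                (mul_le_mul_of_nonneg_right hKC₃ hb0)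
            have hq2 : C₃ * F (-y) ≤ K * a :=
              (mul_le_mul_of_nonneg_left hFya' (by linarith)).trans
                (mul_le_mul_of_nonneg_right hKC₃ ha0)
            have hq3 : C₂ ^ 4 + C₄ ≤ K := hKconst
            nlinarith [hq1, hq2, hq3]
    -- Case A : g₂ z z' ≥ 1/2 gives the w-bound
    have hcaseA : 1 / 2 ≤ g₂ z z' → |R' y z z'| ≤ K * (b + b ^ 2) := by
      intro hb2
      have hbpos : (0:ℝ) < g₂ z z' := by linarith
      have hbne : g₂ z z' ≠ 0 := ne_of_gt hbpos
      have hfact : g₂ 0 z * g₂ y z * g₂ 0 z' * g₂ y z'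
            - g₃ 0 z z' * g₃ y z z' / g₂ z z'
          = (g₂ 0 z * g₂ y z / g₂ z z') *
            (g₂ 0 z' * g₂ y z' * (g₂ z z' - 1)
              - g₂ 0 z' * R₂ (z - y) (z' - y)
              - g₂ y z' * R₂ z z'
              - R₂ z z' * R₂ (z - y) (z' - y)) := by
        rw [hR₂ z z', hL2 y z z']
        field_simp
        ring
      have hcoeff : |g₂ 0 z * g₂ y z / g₂ z z'| ≤ 2 * C₂ ^ 2 := by
        rw [abs_of_nonneg (div_nonneg (mul_nonneg (hg₂nonneg 0 z) (hg₂nonneg y z)) hbpos.le),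
          div_le_iff₀ hbpos]
        have b1 := hC₂ 0 z; have b2 := hC₂ y z
        have n1 := hg₂nonneg 0 z; have n2 := hg₂nonneg y z
        nlinarith
      have t1 : |g₂ 0 z' * g₂ y z' * (g₂ z z' - 1)| ≤ C₂ ^ 2 * b := by
        rw [abs_mul, abs_mul, abs_of_nonneg (hg₂nonneg 0 z'), abs_of_nonneg (hg₂nonneg y z')]
        have hh := (hEw z z').trans hFzb'
        have b1 := hC₂ 0 z'; have b2 := hC₂ y z'
        have n1 := hg₂nonneg 0 z'; have n2 := hg₂nonneg y z'
        have habs : (0:ℝ) ≤ |g₂ z z' - 1| := abs_nonneg _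
        have m1 : g₂ 0 z' * g₂ y z' ≤ C₂ * C₂ := mul_le_mul b1 b2 n2 (by linarith)
        have m2 : g₂ 0 z' * g₂ y z' * |g₂ z z' - 1| ≤ C₂ * C₂ * b :=
          mul_le_mul m1 hh habs (by nlinarith)
        nlinarith [m2]
      have t2 : |g₂ 0 z' * R₂ (z - y) (z' - y)| ≤ C₂ * b := by
        rw [abs_mul, abs_of_nonneg (hg₂nonneg 0 z')]
        have hh := (hL2b y z z').trans hFzb
        have b1 := hC₂ 0 z'; have n1 := hg₂nonneg 0 z'
        have habs : (0:ℝ) ≤ |R₂ (z - y) (z' - y)| := abs_nonneg _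
        nlinarith
      have t3 : |g₂ y z' * R₂ z z'| ≤ C₂ * b := by
        rw [abs_mul, abs_of_nonneg (hg₂nonneg y z')]
        have hh := (hR₂b z z').trans hFzb
        have b1 := hC₂ y z'; have n1 := hg₂nonneg y z'
        have habs : (0:ℝ) ≤ |R₂ z z'| := abs_nonneg _
        nlinarith
      have t4 : |R₂ z z' * R₂ (z - y) (z' - y)| ≤ b * b := by
        rw [abs_mul]
        have hh1 := (hR₂b z z').trans hFzb
        have hh2 := (hL2b y z z').trans hFzb
        have habs1 : (0:ℝ) ≤ |R₂ z z'| := abs_nonneg _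
        have habs2 : (0:ℝ) ≤ |R₂ (z - y) (z' - y)| := abs_nonneg _
        nlinarith
      have hinner : |g₂ 0 z' * g₂ y z' * (g₂ z z' - 1)
            - g₂ 0 z' * R₂ (z - y) (z' - y)
            - g₂ y z' * R₂ z z'
            - R₂ z z' * R₂ (z - y) (z' - y)|
          ≤ C₂ ^ 2 * b + C₂ * b + C₂ * b + b * b := by
        calc |g₂ 0 z' * g₂ y z' * (g₂ z z' - 1)
              - g₂ 0 z' * R₂ (z - y) (z' - y)
              - g₂ y z' * R₂ z z'
              - R₂ z z' * R₂ (z - y) (z' - y)|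
            ≤ |g₂ 0 z' * g₂ y z' * (g₂ z z' - 1)
              - g₂ 0 z' * R₂ (z - y) (z' - y)
              - g₂ y z' * R₂ z z'| + |R₂ z z' * R₂ (z - y) (z' - y)| := abs_sub _ _
          _ ≤ (|g₂ 0 z' * g₂ y z' * (g₂ z z' - 1)
              - g₂ 0 z' * R₂ (z - y) (z' - y)| + |g₂ y z' * R₂ z z'|)
              + |R₂ z z' * R₂ (z - y) (z' - y)| :=
                add_le_add_left (abs_sub _ _) _
          _ ≤ ((|g₂ 0 z' * g₂ y z' * (g₂ z z' - 1)| + |g₂ 0 z' * R₂ (z - y) (z' - y)|)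
              + |g₂ y z' * R₂ z z'|)
              + |R₂ z z' * R₂ (z - y) (z' - y)| := by
                apply add_le_add_left
                exact add_le_add_left (abs_sub _ _) _
          _ ≤ C₂ ^ 2 * b + C₂ * b + C₂ * b + b * b :=
                add_le_add (add_le_add (add_le_add t1 t2) t3) t4
      have hCB : |g₂ 0 z * g₂ y z * g₂ 0 z' * g₂ y z'
            - g₃ 0 z z' * g₃ y z z' / g₂ z z'|
          ≤ 2 * C₂ ^ 2 * (C₂ ^ 2 * b + C₂ * b + C₂ * b + b * b) := by
        rw [hfact, abs_mul]
        exact mul_le_mul hcoeff hinner (abs_nonneg _) (by positivity)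
      have heq : R' y z z' =
          (g₄ 0 y z z' - g₃ 0 y z * g₃ 0 y z' / g₂ 0 y)
          + (g₂ 0 z * g₂ y z * g₂ 0 z' * g₂ y z' - g₃ 0 z z' * g₃ y z z' / g₂ z z') := by
        simp only [hR'def]; ring
      calc |R' y z z'| ≤ |g₄ 0 y z z' - g₃ 0 y z * g₃ 0 y z' / g₂ 0 y|
            + |g₂ 0 z * g₂ y z * g₂ 0 z' * g₂ y z' - g₃ 0 z z' * g₃ y z z' / g₂ z z'| := by
              rw [heq]; exact abs_add_le _ _
        _ ≤ C₃ * F (z - z') + 2 * C₂ ^ 2 * (C₂ ^ 2 * b + C₂ * b + C₂ * b + b * b) :=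
              add_le_add hga hCB
        _ ≤ K * (b + b ^ 2) := by
              have u1 : C₃ * F (z - z') ≤ C₃ * b :=
                mul_le_mul_of_nonneg_left hFzb (by linarith)
              have u2 : (C₃ + 2 * C₂ ^ 2 * (C₂ ^ 2 + 2 * C₂)) * b ≤ K * b :=
                mul_le_mul_of_nonneg_right hKb hb0
              have u3 : (2 * C₂ ^ 2) * (b * b) ≤ K * (b * b) :=
                mul_le_mul_of_nonneg_right hKsq (mul_nonneg hb0 hb0)
              nlinarith [u1, u2, u3]
    -- Case B : g₂ 0 y ≥ 1/2 gives the y-bound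
    have hcaseB : 1 / 2 ≤ g₂ 0 y → |R' y z z'| ≤ K * (a + a ^ 2) := by
      intro ha2
      have hapos : (0:ℝ) < g₂ 0 y := by linarith
      have hane : g₂ 0 y ≠ 0 := ne_of_gt hapos
      have hfact : g₂ 0 z * g₂ y z * g₂ 0 z' * g₂ y z'
            - g₃ 0 y z * g₃ 0 y z' / g₂ 0 y
          = (g₂ y z * g₂ y z' / g₂ 0 y) *
            (g₂ 0 z * g₂ 0 z' * (g₂ 0 y - 1)
              - g₂ 0 z * R₂ (y - z') (-z')
              - g₂ 0 z' * R₂ (y - z) (-z)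
              - R₂ (y - z) (-z) * R₂ (y - z') (-z')) := by
        rw [hL3 y z, hL3 y z']
        field_simp
        ring
      have hcoeff : |g₂ y z * g₂ y z' / g₂ 0 y| ≤ 2 * C₂ ^ 2 := by
        rw [abs_of_nonneg (div_nonneg (mul_nonneg (hg₂nonneg y z) (hg₂nonneg y z')) hapos.le),
          div_le_iff₀ hapos]
        have b1 := hC₂ y z; have b2 := hC₂ y z'
        have n1 := hg₂nonneg y z; have n2 := hg₂nonneg y z'
        nlinarith
      have hEy : |g₂ 0 y - 1| ≤ a := (hH2 y).trans hFya
      have hs1 : |R₂ (y - z) (-z)| ≤ a := (hL3b y z).trans hFya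
      have hs2 : |R₂ (y - z') (-z')| ≤ a := (hL3b y z').trans hFya
      have t1 : |g₂ 0 z * g₂ 0 z' * (g₂ 0 y - 1)| ≤ C₂ ^ 2 * a := by
        rw [abs_mul, abs_mul, abs_of_nonneg (hg₂nonneg 0 z), abs_of_nonneg (hg₂nonneg 0 z')]
        have b1 := hC₂ 0 z; have b2 := hC₂ 0 z'
        have n1 := hg₂nonneg 0 z; have n2 := hg₂nonneg 0 z'
        have habs : (0:ℝ) ≤ |g₂ 0 y - 1| := abs_nonneg _
        have m1 : g₂ 0 z * g₂ 0 z' ≤ C₂ * C₂ := mul_le_mul b1 b2 n2 (by linarith)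
        have m2 : g₂ 0 z * g₂ 0 z' * |g₂ 0 y - 1| ≤ C₂ * C₂ * a :=
          mul_le_mul m1 hEy habs (by nlinarith)
        nlinarith [m2]
      have t2 : |g₂ 0 z * R₂ (y - z') (-z')| ≤ C₂ * a := by
        rw [abs_mul, abs_of_nonneg (hg₂nonneg 0 z)]
        have b1 := hC₂ 0 z; have n1 := hg₂nonneg 0 z
        have habs : (0:ℝ) ≤ |R₂ (y - z') (-z')| := abs_nonneg _
        nlinarith
      have t3 : |g₂ 0 z' * R₂ (y - z) (-z)| ≤ C₂ * a := by
        rw [abs_mul, abs_of_nonneg (hg₂nonneg 0 z')]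
        have b1 := hC₂ 0 z'; have n1 := hg₂nonneg 0 z'
        have habs : (0:ℝ) ≤ |R₂ (y - z) (-z)| := abs_nonneg _
        nlinarith
      have t4 : |R₂ (y - z) (-z) * R₂ (y - z') (-z')| ≤ a * a := by
        rw [abs_mul]
        have habs1 : (0:ℝ) ≤ |R₂ (y - z) (-z)| := abs_nonneg _
        have habs2 : (0:ℝ) ≤ |R₂ (y - z') (-z')| := abs_nonneg _
        nlinarith
      have hinner : |g₂ 0 z * g₂ 0 z' * (g₂ 0 y - 1)
            - g₂ 0 z * R₂ (y - z') (-z')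
            - g₂ 0 z' * R₂ (y - z) (-z)
            - R₂ (y - z) (-z) * R₂ (y - z') (-z')|
          ≤ C₂ ^ 2 * a + C₂ * a + C₂ * a + a * a := by
        calc |g₂ 0 z * g₂ 0 z' * (g₂ 0 y - 1)
              - g₂ 0 z * R₂ (y - z') (-z')
              - g₂ 0 z' * R₂ (y - z) (-z)
              - R₂ (y - z) (-z) * R₂ (y - z') (-z')|
            ≤ |g₂ 0 z * g₂ 0 z' * (g₂ 0 y - 1)
              - g₂ 0 z * R₂ (y - z') (-z')
              - g₂ 0 z' * R₂ (y - z) (-z)|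
              + |R₂ (y - z) (-z) * R₂ (y - z') (-z')| := abs_sub _ _
          _ ≤ (|g₂ 0 z * g₂ 0 z' * (g₂ 0 y - 1) - g₂ 0 z * R₂ (y - z') (-z')|
              + |g₂ 0 z' * R₂ (y - z) (-z)|)
              + |R₂ (y - z) (-z) * R₂ (y - z') (-z')| :=
                add_le_add_left (abs_sub _ _) _
          _ ≤ ((|g₂ 0 z * g₂ 0 z' * (g₂ 0 y - 1)| + |g₂ 0 z * R₂ (y - z') (-z')|)
              + |g₂ 0 z' * R₂ (y - z) (-z)|)
              + |R₂ (y - z) (-z) * R₂ (y - z') (-z')| := by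
                apply add_le_add_left
                exact add_le_add_left (abs_sub _ _) _
          _ ≤ C₂ ^ 2 * a + C₂ * a + C₂ * a + a * a :=
                add_le_add (add_le_add (add_le_add t1 t2) t3) t4
      have hCA : |g₂ 0 z * g₂ y z * g₂ 0 z' * g₂ y z'
            - g₃ 0 y z * g₃ 0 y z' / g₂ 0 y|
          ≤ 2 * C₂ ^ 2 * (C₂ ^ 2 * a + C₂ * a + C₂ * a + a * a) := by
        rw [hfact, abs_mul]
        exact mul_le_mul hcoeff hinner (abs_nonneg _) (by positivity)
      have heq : R' y z z' =
          (g₄ 0 y z z' - g₃ 0 z z' * g₃ y z z' / g₂ z z')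
          + (g₂ 0 z * g₂ y z * g₂ 0 z' * g₂ y z' - g₃ 0 y z * g₃ 0 y z' / g₂ 0 y) := by
        simp only [hR'def]; ring
      calc |R' y z z'| ≤ |g₄ 0 y z z' - g₃ 0 z z' * g₃ y z z' / g₂ z z'|
            + |g₂ 0 z * g₂ y z * g₂ 0 z' * g₂ y z' - g₃ 0 y z * g₃ 0 y z' / g₂ 0 y| := by
              rw [heq]; exact abs_add_le _ _
        _ ≤ C₃ * F (-y) + 2 * C₂ ^ 2 * (C₂ ^ 2 * a + C₂ * a + C₂ * a + a * a) :=
              add_le_add hgb hCA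
        _ ≤ K * (a + a ^ 2) := by
              have u1 : C₃ * F (-y) ≤ C₃ * a :=
                mul_le_mul_of_nonneg_left hFya' (by linarith)
              have u2 : (C₃ + 2 * C₂ ^ 2 * (C₂ ^ 2 + 2 * C₂)) * a ≤ K * a :=
                mul_le_mul_of_nonneg_right hKb ha0
              have u3 : (2 * C₂ ^ 2) * (a * a) ≤ K * (a * a) :=
                mul_le_mul_of_nonneg_right hKsq (mul_nonneg ha0 ha0)
              nlinarith [u1, u2, u3]
    -- degenerate cases force a, b ≥ 1/2
    have hdegY : g₂ 0 y < 1 / 2 → 1 / 2 ≤ a := by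
      intro h
      have h1 : 1 / 2 ≤ |g₂ 0 y - 1| := by
        rw [abs_sub_comm, abs_of_nonneg (by linarith : (0:ℝ) ≤ 1 - g₂ 0 y)]
        linarith
      have h2 : (1:ℝ) / 2 ≤ F y := h1.trans (hH2 y)
      have := hFnn (-y)
      simp only [hadef]
      linarith
    have hdegW : g₂ z z' < 1 / 2 → 1 / 2 ≤ b := by
      intro h
      have h1 : 1 / 2 ≤ |g₂ z z' - 1| := by
        rw [abs_sub_comm, abs_of_nonneg (by linarith : (0:ℝ) ≤ 1 - g₂ z z')]
        linarith
      have h2 : (1:ℝ) / 2 ≤ F (z' - z) := h1.trans (hEw z z')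
      have := hFnn (z - z')
      simp only [hbdef]
      linarith
    -- combine
    apply aux_arith hK1 ha0 hb0 (abs_nonneg _)
    rcases le_or_gt (1/2 : ℝ) (g₂ 0 y) with hya | hya <;>
      rcases le_or_gt (1/2 : ℝ) (g₂ z z') with hwa | hwa
    · exact Or.inl ⟨hcaseB hya, hcaseA hwa⟩
    · exact Or.inr (Or.inr (Or.inl ⟨hdegW hwa, hcaseB hya, hglobal⟩))
    · exact Or.inr (Or.inl ⟨hdegY hya, hcaseA hwa, hglobal⟩)
    · exact Or.inr (Or.inr (Or.inr ⟨hdegY hya, hdegW hwa, hglobal⟩))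
  -- construction of F'
  set Ft : E3 → ℝ := fun x => F x + F (-x) with hFtdef
  have hFtnn : ∀ x, 0 ≤ Ft x := fun x => by
    have h1 := hFnn x; have h2 := hFnn (-x)
    simp only [hFtdef]
    linarith
  set F' : E3 → ℝ := fun x => 2 * Real.sqrt K * (Real.sqrt (Ft x) + Ft x) with hF'def
  -- membership proofs
  have hmp : MeasurePreserving (fun x : E3 => -x) volume volume :=
    Measure.measurePreserving_neg volume
  have hFnegq : MemLp (fun x : E3 => F (-x)) (ENNReal.ofReal q) volume :=
    hF.1.comp_measurePreserving hmp
  have hFnegtop : MemLp (fun x : E3 => F (-x)) ⊤ volume :=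
    hF.2.comp_measurePreserving hmp
  have hFtq : MemLp Ft (ENNReal.ofReal q) volume := hF.1.add hFnegq
  have hFttop : MemLp Ft ⊤ volume := hF.2.add hFnegtop
  have hFtaesm : AEStronglyMeasurable Ft volume := hFtq.1
  have hsqrt_aesm : AEStronglyMeasurable (fun x => Real.sqrt (Ft x)) volume :=
    Real.continuous_sqrt.comp_aestronglyMeasurable hFtaesm
  have hsqrt_mem : MemLp (fun x => Real.sqrt (Ft x)) (ENNReal.ofReal (2 * q)) volume := by
    refine ⟨hsqrt_aesm, ?_⟩
    have heq : (fun x => Real.sqrt (Ft x)) = fun x => ‖Ft x‖ ^ ((1:ℝ)/2) := by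
      funext x
      rw [Real.norm_of_nonneg (hFtnn x), Real.sqrt_eq_rpow]
    rw [heq, eLpNorm_norm_rpow Ft (by norm_num : (0:ℝ) < 1/2)]
    have hexp : ENNReal.ofReal (2 * q) * ENNReal.ofReal (1/2) = ENNReal.ofReal q := by
      rw [← ENNReal.ofReal_mul (by linarith : (0:ℝ) ≤ 2 * q)]
      congr 1
      ring
    rw [hexp]
    exact ENNReal.rpow_lt_top_of_nonneg (by norm_num) hFtq.2.ne
  -- essential bound for Ft
  have hMbound : ∀ᵐ x ∂(volume : Measure E3), ‖Ft x‖ ≤ (eLpNorm Ft ⊤ volume).toReal := by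
    have h1 := ae_le_eLpNormEssSup (f := Ft) (μ := (volume : Measure E3))
    filter_upwards [h1] with x hx
    have hne : eLpNormEssSup Ft volume ≠ ⊤ := by
      rw [← eLpNorm_exponent_top]
      exact hFttop.2.ne
    have h2 := ENNReal.toReal_mono hne hx
    rw [eLpNorm_exponent_top]
    calc ‖Ft x‖ = ((‖Ft x‖₊ : ENNReal)).toReal := by simp
      _ ≤ (eLpNormEssSup Ft volume).toReal := h2
  have hsqrt_top : MemLp (fun x => Real.sqrt (Ft x)) ⊤ volume := by
    apply memLp_top_of_bound hsqrt_aesm (Real.sqrt ((eLpNorm Ft ⊤ volume).toReal))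
    filter_upwards [hMbound] with x hx
    rw [Real.norm_of_nonneg (Real.sqrt_nonneg _)]
    apply Real.sqrt_le_sqrt
    calc Ft x ≤ |Ft x| := le_abs_self _
      _ = ‖Ft x‖ := rfl
      _ ≤ _ := hx
  have hFt2q : MemLp Ft (ENNReal.ofReal (2 * q)) volume := by
    have hsm : MemLp ((fun x => Real.sqrt (Ft x)) • fun x => Real.sqrt (Ft x))
        (ENNReal.ofReal (2 * q)) volume :=
      MemLp.smul hsqrt_mem hsqrt_top
    have heq : ((fun x => Real.sqrt (Ft x)) • fun x => Real.sqrt (Ft x)) = Ft := by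
      funext x
      simp only [Pi.smul_apply', Pi.smul_apply, smul_eq_mul]
      exact Real.mul_self_sqrt (hFtnn x)
    rwa [heq] at hsm
  have hF'q : MemLp F' (ENNReal.ofReal (2 * q)) volume := by
    have hsum : MemLp ((fun x => Real.sqrt (Ft x)) + Ft) (ENNReal.ofReal (2 * q)) volume :=
      hsqrt_mem.add hFt2q
    exact hsum.const_mul (2 * Real.sqrt K)
  have hF'top : MemLp F' ⊤ volume := by
    have hsum : MemLp ((fun x => Real.sqrt (Ft x)) + Ft) ⊤ volume :=
      hsqrt_top.add hFttop
    exact hsum.const_mul (2 * Real.sqrt K)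
  -- conclusion
  refine ⟨2 * q, by linarith, F', ⟨hF'q, hF'top⟩, R', ?_, ?_⟩
  · intro y z z'
    simp only [hR'def]
    ring
  · intro y z z'
    have hbnd := hmain y z z'
    have hFteq : Ft (z - z') = F (z - z') + F (z' - z) := by
      simp only [hFtdef, neg_sub]
    have hFty : Ft y = F y + F (-y) := rfl
    have hsqK : Real.sqrt K * Real.sqrt K = K := Real.mul_self_sqrt hK0
    have hprod : F' y * F' (z - z') =
        4 * (Real.sqrt K * Real.sqrt K) *
          ((Real.sqrt (Ft y) + Ft y) * (Real.sqrt (Ft (z - z')) + Ft (z - z'))) := by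
      simp only [hF'def]
      ring
    rw [hprod, hsqK, hFteq, hFty]
    exact hbnd
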